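/- Let p > 0 with 2/p ∈ ℕ. For all ω ≥ 0, φ ∈ [0,2π) and r > 0, the differential formula (d/dr)[r^{1+(p−1)ω}·𝒥_{ω+1,φ}^{[p]}(r)] = r^{1+(p−1)ω}·𝒥_{ω,φ}^{[p]}(r) holds. -/

import Mathlib

/-- The one-variable generalized Bessel function `𝒥_{ω,φ}^{[p]}(r)`, via its series. -/
noncomputable def calJ (p ω φ r : ℝ) : ℝ :=
  ((2 / p) ^ 2 / Real.Gamma (1 / p) ^ 2) *
    ∑' k : ℕ, (p ^ (2 * k) * (-1 : ℝ) ^ k / Real.Gamma ((2 / p) * ((k : ℝ) + 1) + ω)) *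
      (r / p) ^ (2 * (k : ℝ) + ω) *
      ∑ n ∈ Finset.range (k + 1),
        Real.Gamma ((2 * (n : ℝ) + 1) / p) * Real.Gamma ((2 * ((k - n : ℕ) : ℝ) + 1) / p) /
            ((Nat.factorial (2 * n) : ℝ) * (Nat.factorial (2 * (k - n)) : ℝ)) *
          (|Real.cos φ| ^ (4 * (n : ℝ) / p) * |Real.sin φ| ^ (4 * ((k - n : ℕ) : ℝ) / p))

open Real Finset
lemma gamma_mono {x y : ℝ} (hx : 2 ≤ x) (hxy : x ≤ y) : Real.Gamma x ≤ Real.Gamma y :=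
  Real.Gamma_strictMonoOn_Ici.monotoneOn hx (le_trans hx hxy) hxy

lemma gamma_le_shift {x : ℝ} (hx : 1/2 ≤ x) : Real.Gamma x ≤ 4/3 * Real.Gamma (x+2) := by
  have hx0 : 0 < x := by linarith
  have h1 : Real.Gamma (x+2) = (x+1) * (x * Real.Gamma x) := by
    rw [show x + 2 = (x+1) + 1 by ring, Real.Gamma_add_one (by linarith),
      Real.Gamma_add_one hx0.ne']
  have hG : 0 < Real.Gamma x := Real.Gamma_pos_of_pos hx0
  rw [h1]
  nlinarith [mul_nonneg (mul_nonneg (by linarith : (0:ℝ) ≤ x - 1/2) (by linarith : (0:ℝ) ≤ x + 3/2)) hG.le]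

lemma gamma_half_le (q n : ℕ) (hq1 : 1 ≤ q) :
    Real.Gamma ((q:ℝ)*n + q/2) ≤ 4/3 * (Nat.factorial (q*n+q+1) : ℝ) := by
  have hq1' : (1:ℝ) ≤ q := by exact_mod_cast hq1
  have h1 : Real.Gamma ((q:ℝ)*n + q/2) ≤ 4/3 * Real.Gamma ((q:ℝ)*n + q/2 + 2) :=
    gamma_le_shift (by nlinarith [Nat.cast_nonneg (α := ℝ) n])
  have h2 : Real.Gamma ((q:ℝ)*n + q/2 + 2) ≤ Real.Gamma (((q*n+q+1:ℕ):ℝ) + 1) := by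
    apply gamma_mono
    · nlinarith [Nat.cast_nonneg (α := ℝ) n]
    · push_cast; nlinarith [Nat.cast_nonneg (α := ℝ) n]
  rw [Real.Gamma_nat_eq_factorial] at h2
  linarith

lemma nat_fact_add_le (n m : ℕ) : Nat.factorial (n+m) ≤ Nat.factorial n * (n+m)^m := by
  induction m with
  | zero => simp
  | succ m ih =>
      rw [show n + (m+1) = (n+m) + 1 by ring, Nat.factorial_succ]
      calc (n+m+1) * Nat.factorial (n+m) ≤ (n+m+1) * (Nat.factorial n * (n+m)^m) := by
            exact Nat.mul_le_mul_left _ ih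
        _ ≤ Nat.factorial n * (n+(m+1))^(m+1) := by
            rw [pow_succ]
            have h1 : (n+m)^m ≤ (n+m+1)^m := Nat.pow_le_pow_left (by omega) m
            calc (n+m+1) * (Nat.factorial n * (n+m)^m)
                = Nat.factorial n * ((n+m)^m * (n+m+1)) := by ring
              _ ≤ Nat.factorial n * ((n+m+1)^m * (n+m+1)) := by
                  exact Nat.mul_le_mul_left _ (Nat.mul_le_mul_right _ h1)
              _ = Nat.factorial n * ((n+(m+1))^m * (n+(m+1))) := by ring_nf

lemma fact_k_le (n k : ℕ) (h : n ≤ k) :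
    Nat.factorial k ≤ Nat.factorial (2*n) * Nat.factorial (2*(k-n)) := by
  rcases le_or_gt k (2*n) with h1 | h1
  · calc Nat.factorial k ≤ Nat.factorial (2*n) := Nat.factorial_le h1
      _ ≤ _ := Nat.le_mul_of_pos_right _ (Nat.factorial_pos _)
  · calc Nat.factorial k ≤ Nat.factorial (2*(k-n)) := Nat.factorial_le (by omega)
      _ ≤ _ := Nat.le_mul_of_pos_left _ (Nat.factorial_pos _)

lemma fact_mul_fact_le (a b : ℕ) :
    Nat.factorial a * Nat.factorial b ≤ Nat.factorial (a+b) :=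
  Nat.le_of_dvd (Nat.factorial_pos _) (Nat.factorial_mul_factorial_dvd_factorial_add a b)

lemma pow_k_le (d k : ℕ) : ((k:ℝ)+1)^d ≤ (((2:ℝ)^d))^k := by
  have h1 : ((k:ℝ)+1) ≤ 2^k := by
    have := Nat.lt_two_pow_self (n := k)
    have : (k+1 : ℕ) ≤ 2^k := this
    exact_mod_cast this
  calc ((k:ℝ)+1)^d ≤ ((2:ℝ)^k)^d := pow_le_pow_left₀ (by positivity) h1 d
    _ = _ := by rw [← pow_mul, Nat.mul_comm, pow_mul]

lemma summable_aux (c D : ℝ) (d : ℕ) (hD : 0 ≤ D) :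
    Summable (fun k : ℕ => c * (((k:ℝ)+1)^d * D^k / Nat.factorial k)) := by
  apply Summable.mul_left
  apply Summable.of_nonneg_of_le (fun k => by positivity) (fun k => ?_)
    (Real.summable_pow_div_factorial (2^d * D))
  rw [mul_pow]
  gcongr
  exact pow_k_le d k

/-- Inner angular sum. -/
noncomputable def calS (p φ : ℝ) (k : ℕ) : ℝ :=
  ∑ n ∈ Finset.range (k + 1),
    Real.Gamma ((2 * (n : ℝ) + 1) / p) * Real.Gamma ((2 * ((k - n : ℕ) : ℝ) + 1) / p) /
        ((Nat.factorial (2 * n) : ℝ) * (Nat.factorial (2 * (k - n)) : ℝ)) *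
      (|Real.cos φ| ^ (4 * (n : ℝ) / p) * |Real.sin φ| ^ (4 * ((k - n : ℕ) : ℝ) / p))

lemma calS_nonneg {p : ℝ} (hp : 0 < p) (φ : ℝ) (k : ℕ) : 0 ≤ calS p φ k := by
  apply Finset.sum_nonneg
  intro n _
  have h1 : 0 < Real.Gamma ((2 * (n : ℝ) + 1) / p) :=
    Real.Gamma_pos_of_pos (by positivity)
  have h2 : 0 < Real.Gamma ((2 * ((k - n : ℕ) : ℝ) + 1) / p) :=
    Real.Gamma_pos_of_pos (by positivity)
  have h3 := Nat.factorial_pos (2*n)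
  have h4 := Nat.factorial_pos (2*(k-n))
  positivity

lemma calS_le {p : ℝ} (hp : 0 < p) {q : ℕ} (hq : (q:ℝ) = 2/p) (hq1 : 1 ≤ q) (φ : ℝ) (k : ℕ) :
    calS p φ k ≤ 16/9 * ((k:ℝ)+1) *
      ((Nat.factorial (q*k+2*q+2) : ℝ) / (Nat.factorial k : ℝ)) := by
  have harg : ∀ n : ℕ, (2 * (n : ℝ) + 1) / p = (q:ℝ)*n + q/2 := by
    intro n; rw [hq]; field_simp
  have key : ∀ n ∈ Finset.range (k+1),
      Real.Gamma ((2 * (n : ℝ) + 1) / p) * Real.Gamma ((2 * ((k - n : ℕ) : ℝ) + 1) / p) /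
        ((Nat.factorial (2 * n) : ℝ) * (Nat.factorial (2 * (k - n)) : ℝ)) *
      (|Real.cos φ| ^ (4 * (n : ℝ) / p) * |Real.sin φ| ^ (4 * ((k - n : ℕ) : ℝ) / p)) ≤
      16/9 * ((Nat.factorial (q*k+2*q+2) : ℝ) / (Nat.factorial k : ℝ)) := by
    intro n hn
    have hnk : n ≤ k := by simpa [Nat.lt_succ_iff] using Finset.mem_range.mp hn
    have hG1 : 0 < Real.Gamma ((2 * (n : ℝ) + 1) / p) := Real.Gamma_pos_of_pos (by positivity)
    have hG2 : 0 < Real.Gamma ((2 * ((k - n : ℕ) : ℝ) + 1) / p) :=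
      Real.Gamma_pos_of_pos (by positivity)
    have hf1 : (0:ℝ) < (Nat.factorial (2*n) : ℝ) := by exact_mod_cast Nat.factorial_pos _
    have hf2 : (0:ℝ) < (Nat.factorial (2*(k-n)) : ℝ) := by exact_mod_cast Nat.factorial_pos _
    -- the trig factor is ≤ 1
    have htrig : |Real.cos φ| ^ (4 * (n : ℝ) / p) * |Real.sin φ| ^ (4 * ((k - n : ℕ) : ℝ) / p) ≤ 1 := by
      have h1 : |Real.cos φ| ^ (4 * (n : ℝ) / p) ≤ 1 :=
        Real.rpow_le_one (abs_nonneg _) (abs_cos_le_one φ) (by positivity)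
      have h2 : |Real.sin φ| ^ (4 * ((k - n : ℕ) : ℝ) / p) ≤ 1 :=
        Real.rpow_le_one (abs_nonneg _) (abs_sin_le_one φ) (by positivity)
      have h1' : 0 ≤ |Real.cos φ| ^ (4 * (n : ℝ) / p) := Real.rpow_nonneg (abs_nonneg _) _
      nlinarith [Real.rpow_nonneg (abs_nonneg (Real.sin φ)) (4 * ((k - n : ℕ) : ℝ) / p)]
    have htrig0 : 0 ≤ |Real.cos φ| ^ (4 * (n : ℝ) / p) * |Real.sin φ| ^ (4 * ((k - n : ℕ) : ℝ) / p) := by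
      positivity
    calc _ ≤ Real.Gamma ((2 * (n : ℝ) + 1) / p) * Real.Gamma ((2 * ((k - n : ℕ) : ℝ) + 1) / p) /
        ((Nat.factorial (2 * n) : ℝ) * (Nat.factorial (2 * (k - n)) : ℝ)) * 1 :=
          mul_le_mul_of_nonneg_left htrig (by positivity)
      _ ≤ 16/9 * ((Nat.factorial (q*k+2*q+2) : ℝ) / (Nat.factorial k : ℝ)) := ?_
    rw [mul_one]
    -- numerator bound
    have hnum : Real.Gamma ((2 * (n : ℝ) + 1) / p) * Real.Gamma ((2 * ((k - n : ℕ) : ℝ) + 1) / p) ≤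
        16/9 * (Nat.factorial (q*k+2*q+2) : ℝ) := by
      have b1 : Real.Gamma ((2 * (n : ℝ) + 1) / p) ≤ 4/3 * (Nat.factorial (q*n+q+1) : ℝ) := by
        rw [harg n]; exact gamma_half_le q n hq1
      have b2 : Real.Gamma ((2 * ((k-n:ℕ) : ℝ) + 1) / p) ≤ 4/3 * (Nat.factorial (q*(k-n)+q+1) : ℝ) := by
        rw [harg (k-n)]; exact gamma_half_le q (k-n) hq1
      have b3 : (Nat.factorial (q*n+q+1) : ℝ) * (Nat.factorial (q*(k-n)+q+1) : ℝ) ≤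
          (Nat.factorial (q*k+2*q+2) : ℝ) := by
        have := fact_mul_fact_le (q*n+q+1) (q*(k-n)+q+1)
        have heq : (q*n+q+1) + (q*(k-n)+q+1) = q*k+2*q+2 := by
          have : q*n + q*(k-n) = q*k := by
            rw [← Nat.mul_add]
            congr 1
            omega
          omega
        rw [heq] at this
        exact_mod_cast this
      calc Real.Gamma ((2 * (n : ℝ) + 1) / p) * Real.Gamma ((2 * ((k-n:ℕ) : ℝ) + 1) / p)
          ≤ (4/3 * (Nat.factorial (q*n+q+1) : ℝ)) * (4/3 * (Nat.factorial (q*(k-n)+q+1) : ℝ)) := by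
            apply mul_le_mul b1 b2 hG2.le (by positivity)
        _ = 16/9 * ((Nat.factorial (q*n+q+1) : ℝ) * (Nat.factorial (q*(k-n)+q+1) : ℝ)) := by ring
        _ ≤ _ := by linarith
    have hden : (Nat.factorial k : ℝ) ≤ (Nat.factorial (2*n) : ℝ) * (Nat.factorial (2*(k-n)) : ℝ) := by
      exact_mod_cast fact_k_le n k hnk
    calc Real.Gamma ((2 * (n : ℝ) + 1) / p) * Real.Gamma ((2 * ((k-n:ℕ) : ℝ) + 1) / p) /
        ((Nat.factorial (2 * n) : ℝ) * (Nat.factorial (2 * (k - n)) : ℝ))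
        ≤ (16/9 * (Nat.factorial (q*k+2*q+2) : ℝ)) / ((Nat.factorial (2 * n) : ℝ) * (Nat.factorial (2 * (k - n)) : ℝ)) := by
          gcongr
        _ ≤ (16/9 * (Nat.factorial (q*k+2*q+2) : ℝ)) / (Nat.factorial k : ℝ) := by
          have hfk : (0:ℝ) < (Nat.factorial k : ℝ) := by exact_mod_cast Nat.factorial_pos k
          gcongr
        _ = 16/9 * ((Nat.factorial (q*k+2*q+2) : ℝ) / (Nat.factorial k : ℝ)) := by ring
  calc calS p φ k ≤ ∑ n ∈ Finset.range (k+1),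
        (16/9 * ((Nat.factorial (q*k+2*q+2) : ℝ) / (Nat.factorial k : ℝ))) :=
        Finset.sum_le_sum key
    _ = ((k:ℝ)+1) * (16/9 * ((Nat.factorial (q*k+2*q+2) : ℝ) / (Nat.factorial k : ℝ))) := by
        rw [Finset.sum_const, Finset.card_range, nsmul_eq_mul]; push_cast; ring
    _ = _ := by ring

/-- Coefficient of `t ^ (2k+2+pω)` in the rewritten series. -/
noncomputable def calB (p ω φ : ℝ) (k : ℕ) : ℝ :=
  (-1:ℝ)^k * (p^(2*k) / Real.Gamma ((2/p) * ((k:ℝ)+1) + (ω+1)) *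
    (calS p φ k / p ^ (2*(k:ℝ)+(ω+1))))

lemma calB_abs_le {p : ℝ} (hp : 0 < p) {q : ℕ} (hq : (q:ℝ) = 2/p) (hq1 : 1 ≤ q)
    {ω : ℝ} (hω : 0 ≤ ω) (φ : ℝ) (k : ℕ) :
    |calB p ω φ k| ≤ (16/9 * (2*(q:ℝ)+2)^(q+2) / p^((ω+1 : ℝ))) *
      (((k:ℝ)+1)^(q+3) / Nat.factorial k) := by
  have hq1' : (1:ℝ) ≤ q := by exact_mod_cast hq1
  have hk0 : (0:ℝ) ≤ k := Nat.cast_nonneg k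
  have hS0 : 0 ≤ calS p φ k := calS_nonneg hp φ k
  have hargpos : 0 < (2/p) * ((k:ℝ)+1) + (ω+1) := by positivity
  have hΓpos : 0 < Real.Gamma ((2/p) * ((k:ℝ)+1) + (ω+1)) := Real.Gamma_pos_of_pos hargpos
  have hprp : p ^ (2*(k:ℝ)+(ω+1)) = p^(2*k) * p^((ω+1:ℝ)) := by
    rw [Real.rpow_add hp]
    congr 1
    rw [← Real.rpow_natCast p (2*k)]
    congr 1
    push_cast; ring
  have hrp : (0:ℝ) < p^((ω+1:ℝ)) := Real.rpow_pos_of_pos hp _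
  have habs : |calB p ω φ k| = calS p φ k /
      (Real.Gamma ((2/p) * ((k:ℝ)+1) + (ω+1)) * p^((ω+1:ℝ))) := by
    rw [calB, abs_mul, abs_pow, abs_neg, abs_one, one_pow, one_mul,
      abs_of_nonneg (by positivity), hprp]
    field_simp
  have hΓge : ((Nat.factorial (q*k+q) : ℝ)) ≤ Real.Gamma ((2/p) * ((k:ℝ)+1) + (ω+1)) := by
    calc ((Nat.factorial (q*k+q) : ℝ)) = Real.Gamma (((q*k+q:ℕ):ℝ)+1) :=
        (Real.Gamma_nat_eq_factorial _).symm
      _ ≤ _ := by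
        apply gamma_mono
        · push_cast; nlinarith
        · rw [← hq]; push_cast; nlinarith
  have hfq : (0:ℝ) < (Nat.factorial (q*k+q) : ℝ) := by exact_mod_cast Nat.factorial_pos _
  have hfk : (0:ℝ) < (Nat.factorial k : ℝ) := by exact_mod_cast Nat.factorial_pos _
  have hfact : ((Nat.factorial (q*k+2*q+2) : ℝ)) ≤
      (Nat.factorial (q*k+q) : ℝ) * ((q*k+2*q+2 : ℕ):ℝ)^(q+2) := by
    have := nat_fact_add_le (q*k+q) (q+2)
    rw [show q*k+q+(q+2) = q*k+2*q+2 by omega] at this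
    exact_mod_cast this
  have hpow : ((q*k+2*q+2 : ℕ):ℝ)^(q+2) ≤ (2*(q:ℝ)+2)^(q+2) * ((k:ℝ)+1)^(q+2) := by
    rw [← mul_pow]
    apply pow_le_pow_left₀ (by positivity)
    push_cast; nlinarith
  rw [habs]
  calc calS p φ k / (Real.Gamma ((2/p) * ((k:ℝ)+1) + (ω+1)) * p^((ω+1:ℝ)))
      ≤ (16/9 * ((k:ℝ)+1) * ((Nat.factorial (q*k+2*q+2) : ℝ) / (Nat.factorial k : ℝ))) /
        ((Nat.factorial (q*k+q) : ℝ) * p^((ω+1:ℝ))) := by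
        gcongr
        · exact calS_le hp hq hq1 φ k
    _ ≤ (16/9 * ((k:ℝ)+1) * (((Nat.factorial (q*k+q) : ℝ) * ((2*(q:ℝ)+2)^(q+2) * ((k:ℝ)+1)^(q+2))) / (Nat.factorial k : ℝ))) /
        ((Nat.factorial (q*k+q) : ℝ) * p^((ω+1:ℝ))) := by
        gcongr
        calc ((Nat.factorial (q*k+2*q+2) : ℝ)) ≤
            (Nat.factorial (q*k+q) : ℝ) * ((q*k+2*q+2 : ℕ):ℝ)^(q+2) := hfact
          _ ≤ _ := by gcongr
    _ = (16/9 * (2*(q:ℝ)+2)^(q+2) / p^((ω+1:ℝ))) * ((((k:ℝ)+1)^(q+2) * ((k:ℝ)+1)) / Nat.factorial k) := by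
        field_simp
    _ = _ := by rw [show q+3 = q+2+1 by ring, pow_succ ((k:ℝ)+1) (q+2)]

noncomputable def calG (p ω φ : ℝ) (k : ℕ) (t : ℝ) : ℝ :=
  calB p ω φ k * t ^ (2*(k:ℝ)+2+p*ω)

noncomputable def calG' (p ω φ : ℝ) (k : ℕ) (t : ℝ) : ℝ :=
  calB p ω φ k * ((2*(k:ℝ)+2+p*ω) * t ^ (2*(k:ℝ)+1+p*ω))

lemma calG_hasDeriv (p ω φ : ℝ) (k : ℕ) {t : ℝ} (ht : t ≠ 0) :
    HasDerivAt (calG p ω φ k) (calG' p ω φ k t) t := by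
  have h := HasDerivAt.const_mul (calB p ω φ k)
    (Real.hasDerivAt_rpow_const (p := 2*(k:ℝ)+2+p*ω) (Or.inl ht))
  rw [show (2*(k:ℝ)+2+p*ω) - 1 = 2*(k:ℝ)+1+p*ω by ring] at h
  exact h

lemma term_eq {p : ℝ} (hp : 0 < p) (ω φ : ℝ) {t : ℝ} (ht : 0 < t) (k : ℕ) :
    t ^ (1+(p-1)*ω) * ((p ^ (2 * k) * (-1 : ℝ) ^ k /
        Real.Gamma ((2 / p) * ((k : ℝ) + 1) + (ω+1))) *
      (t / p) ^ (2 * (k : ℝ) + (ω+1)) *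
      ∑ n ∈ Finset.range (k + 1),
        Real.Gamma ((2 * (n : ℝ) + 1) / p) * Real.Gamma ((2 * ((k - n : ℕ) : ℝ) + 1) / p) /
            ((Nat.factorial (2 * n) : ℝ) * (Nat.factorial (2 * (k - n)) : ℝ)) *
          (|Real.cos φ| ^ (4 * (n : ℝ) / p) * |Real.sin φ| ^ (4 * ((k - n : ℕ) : ℝ) / p))) =
      calG p ω φ k t := by
  have hS : calS p φ k = ∑ n ∈ Finset.range (k + 1),
      Real.Gamma ((2 * (n : ℝ) + 1) / p) * Real.Gamma ((2 * ((k - n : ℕ) : ℝ) + 1) / p) /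
          ((Nat.factorial (2 * n) : ℝ) * (Nat.factorial (2 * (k - n)) : ℝ)) *
        (|Real.cos φ| ^ (4 * (n : ℝ) / p) * |Real.sin φ| ^ (4 * ((k - n : ℕ) : ℝ) / p)) := rfl
  rw [calG, calB, ← hS, Real.div_rpow ht.le hp.le,
    show t ^ (2*(k:ℝ)+2+p*ω) = t^(1+(p-1)*ω) * t^(2*(k:ℝ)+(ω+1)) by
      rw [← Real.rpow_add ht]; congr 1; ring]
  ring

lemma term_deriv_eq {p : ℝ} (hp : 0 < p) {ω : ℝ} (hω : 0 ≤ ω) (φ : ℝ) {r : ℝ} (hr : 0 < r)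
    (k : ℕ) :
    calG' p ω φ k r =
      r ^ (1+(p-1)*ω) * ((p ^ (2 * k) * (-1 : ℝ) ^ k /
        Real.Gamma ((2 / p) * ((k : ℝ) + 1) + ω)) *
      (r / p) ^ (2 * (k : ℝ) + ω) *
      ∑ n ∈ Finset.range (k + 1),
        Real.Gamma ((2 * (n : ℝ) + 1) / p) * Real.Gamma ((2 * ((k - n : ℕ) : ℝ) + 1) / p) /
            ((Nat.factorial (2 * n) : ℝ) * (Nat.factorial (2 * (k - n)) : ℝ)) *
          (|Real.cos φ| ^ (4 * (n : ℝ) / p) * |Real.sin φ| ^ (4 * ((k - n : ℕ) : ℝ) / p))) := by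
  have hS : calS p φ k = ∑ n ∈ Finset.range (k + 1),
      Real.Gamma ((2 * (n : ℝ) + 1) / p) * Real.Gamma ((2 * ((k - n : ℕ) : ℝ) + 1) / p) /
          ((Nat.factorial (2 * n) : ℝ) * (Nat.factorial (2 * (k - n)) : ℝ)) *
        (|Real.cos φ| ^ (4 * (n : ℝ) / p) * |Real.sin φ| ^ (4 * ((k - n : ℕ) : ℝ) / p)) := rfl
  set z : ℝ := (2 / p) * ((k : ℝ) + 1) + ω with hzdef
  have hz : 0 < z := by rw [hzdef]; positivity
  have hΓz : Real.Gamma z ≠ 0 := (Real.Gamma_pos_of_pos hz).ne'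
  have hΓ1 : Real.Gamma ((2/p) * ((k:ℝ)+1) + (ω+1)) = z * Real.Gamma z := by
    rw [show (2/p) * ((k:ℝ)+1) + (ω+1) = z + 1 by rw [hzdef]; ring]
    exact Real.Gamma_add_one hz.ne'
  have hpz : 2*(k:ℝ)+2+p*ω = p * z := by rw [hzdef]; field_simp
  have hpr : (0:ℝ) < p ^ (2*(k:ℝ)+ω) := Real.rpow_pos_of_pos hp _
  have hpr' : p ^ (2*(k:ℝ)+ω) ≠ 0 := hpr.ne'
  have hp' : p ≠ 0 := hp.ne'
  have hz' : z ≠ 0 := hz.ne'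
  rw [calG', calB, ← hS, hΓ1, hpz, Real.div_rpow hr.le hp.le,
    show r ^ (2*(k:ℝ)+1+p*ω) = r^(1+(p-1)*ω) * r^(2*(k:ℝ)+ω) by
      rw [← Real.rpow_add hr]; congr 1; ring,
    show p ^ (2*(k:ℝ)+(ω+1)) = p^(2*(k:ℝ)+ω) * p by
      rw [← Real.rpow_add_one hp.ne']; congr 1; ring]
  field_simp

theorem calJ_deriv_formula (p : ℝ) (hp : 0 < p) (hq : ∃ q : ℕ, (q : ℝ) = 2 / p)
    (ω φ : ℝ) (hω : 0 ≤ ω) (hφ : φ ∈ Set.Ico 0 (2 * Real.pi)) (r : ℝ) (hr : 0 < r) :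
    HasDerivAt (fun t : ℝ => t ^ (1 + (p - 1) * ω) * calJ p (ω + 1) φ t)
      (r ^ (1 + (p - 1) * ω) * calJ p ω φ r) r := by
  obtain ⟨q, hq⟩ := hq
  have hqR : (0:ℝ) < q := by rw [hq]; positivity
  have hq1 : 1 ≤ q := by
    have : 0 < q := by exact_mod_cast hqR
    omega
  have hpω : 0 ≤ p * ω := mul_nonneg hp.le hω
  set M : ℝ := 2*r+1 with hMdef
  have hM0 : (0:ℝ) < M := by rw [hMdef]; linarith
  have hrM : r ∈ Set.Ioo (0:ℝ) M := ⟨hr, by rw [hMdef]; linarith⟩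
  set C4 : ℝ := 16/9 * (2*(q:ℝ)+2)^(q+2) / p^((ω+1 : ℝ)) with hC4def
  have hC4pos : 0 < C4 := by
    rw [hC4def]
    have := Real.rpow_pos_of_pos hp (ω+1)
    positivity
  have hB : ∀ k : ℕ, |calB p ω φ k| ≤ C4 * (((k:ℝ)+1)^(q+3) / Nat.factorial k) :=
    fun k => calB_abs_le hp hq hq1 hω φ k
  -- split of M-powers
  have hMsplit : ∀ (c : ℝ) (k : ℕ), M ^ (c + 2*(k:ℝ)) = M^(c:ℝ) * (M^2)^k := by
    intro c k
    rw [show (c + 2*(k:ℝ)) = c + ((2*k : ℕ) : ℝ) by push_cast; ring,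
      Real.rpow_add hM0, Real.rpow_natCast, pow_mul]
  -- the summable bound for derivatives
  set u : ℕ → ℝ := fun k =>
    |calB p ω φ k| * ((2*(k:ℝ)+2+p*ω) * M ^ (2*(k:ℝ)+1+p*ω)) with hudef
  have hupos : ∀ k, 0 ≤ u k := by
    intro k
    simp only [hudef]
    have := Real.rpow_pos_of_pos hM0 (2*(k:ℝ)+1+p*ω)
    positivity
  have hule : ∀ k, u k ≤ (C4 * ((4+p*ω) * M^((1+p*ω:ℝ)))) *
      (((k:ℝ)+1)^(q+4) * (M^2)^k / Nat.factorial k) := by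
    intro k
    have hk0 : (0:ℝ) ≤ k := Nat.cast_nonneg k
    have hfk : (0:ℝ) < (Nat.factorial k : ℝ) := by exact_mod_cast Nat.factorial_pos _
    have hM2 : M ^ (2*(k:ℝ)+1+p*ω) = M^((1+p*ω:ℝ)) * (M^2)^k := by
      rw [show 2*(k:ℝ)+1+p*ω = (1+p*ω) + 2*(k:ℝ) by ring, hMsplit]
    have hMr : (0:ℝ) < M^((1+p*ω:ℝ)) := Real.rpow_pos_of_pos hM0 _
    calc u k = |calB p ω φ k| * ((2*(k:ℝ)+2+p*ω) * (M^((1+p*ω:ℝ)) * (M^2)^k)) := by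
          simp only [hudef]; rw [hM2]
      _ ≤ (C4 * (((k:ℝ)+1)^(q+3) / Nat.factorial k)) *
          (((4+p*ω)*((k:ℝ)+1)) * (M^((1+p*ω:ℝ)) * (M^2)^k)) := by
          apply mul_le_mul (hB k) ?_ (by positivity) (by positivity)
          apply mul_le_mul_of_nonneg_right ?_ (by positivity)
          nlinarith
      _ = (C4 * ((4+p*ω) * M^((1+p*ω:ℝ)))) *
          (((k:ℝ)+1)^(q+4) * (M^2)^k / Nat.factorial k) := by
          rw [show q+4 = q+3+1 by ring, pow_succ ((k:ℝ)+1) (q+3)]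
          ring
  have hsumu : Summable u :=
    Summable.of_nonneg_of_le hupos hule
      (summable_aux (C4 * ((4+p*ω) * M^((1+p*ω:ℝ)))) (M^2) (q+4) (by positivity))
  -- summability of the series itself at r
  have hg0 : Summable (fun k => calG p ω φ k r) := by
    apply Summable.of_norm_bounded (g := fun k : ℕ => (C4 * M^((2+p*ω:ℝ))) *
      (((k:ℝ)+1)^(q+3) * (M^2)^k / Nat.factorial k))
      (summable_aux (C4 * M^((2+p*ω:ℝ))) (M^2) (q+3) (by positivity))
    intro k
    have hfk : (0:ℝ) < (Nat.factorial k : ℝ) := by exact_mod_cast Nat.factorial_pos _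
    have he0 : (0:ℝ) ≤ 2*(k:ℝ)+2+p*ω := by positivity
    have hrpow : (0:ℝ) < r ^ (2*(k:ℝ)+2+p*ω) := Real.rpow_pos_of_pos hr _
    have hMle : r ^ (2*(k:ℝ)+2+p*ω) ≤ M ^ (2*(k:ℝ)+2+p*ω) :=
      Real.rpow_le_rpow hr.le (by rw [hMdef]; linarith) he0
    have hM2 : M ^ (2*(k:ℝ)+2+p*ω) = M^((2+p*ω:ℝ)) * (M^2)^k := by
      rw [show 2*(k:ℝ)+2+p*ω = (2+p*ω) + 2*(k:ℝ) by ring, hMsplit]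
    rw [Real.norm_eq_abs, calG, abs_mul, abs_of_pos hrpow]
    calc |calB p ω φ k| * r ^ (2*(k:ℝ)+2+p*ω)
        ≤ (C4 * (((k:ℝ)+1)^(q+3) / Nat.factorial k)) * (M^((2+p*ω:ℝ)) * (M^2)^k) := by
          apply mul_le_mul (hB k) (hMle.trans_eq hM2) hrpow.le (by positivity)
      _ = (C4 * M^((2+p*ω:ℝ))) * (((k:ℝ)+1)^(q+3) * (M^2)^k / Nat.factorial k) := by ring
  -- differentiate the series term by term
  have hder : HasDerivAt (fun z => ∑' k, calG p ω φ k z) (∑' k, calG' p ω φ k r) r := by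
    apply hasDerivAt_tsum_of_isPreconnected hsumu isOpen_Ioo
      (convex_Ioo (0:ℝ) M).isPreconnected
      (fun k y hy => calG_hasDeriv p ω φ k (ne_of_gt hy.1)) ?_ hrM hg0 hrM
    intro k y hy
    have hy0 : 0 < y := hy.1
    have he0 : (0:ℝ) < 2*(k:ℝ)+2+p*ω := by positivity
    have hyr : (0:ℝ) < y ^ (2*(k:ℝ)+1+p*ω) := Real.rpow_pos_of_pos hy0 _
    have hMr : (0:ℝ) < M ^ (2*(k:ℝ)+1+p*ω) := Real.rpow_pos_of_pos hM0 _
    simp only [Real.norm_eq_abs, calG', hudef]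
    rw [abs_mul, abs_of_pos (by positivity : (0:ℝ) < (2*(k:ℝ)+2+p*ω) * y ^ (2*(k:ℝ)+1+p*ω))]
    gcongr
    exact hy.2.le
  have hder2 := HasDerivAt.const_mul ((2/p)^2 / Real.Gamma (1/p)^2) hder
  have heq : (fun t : ℝ => t ^ (1 + (p - 1) * ω) * calJ p (ω + 1) φ t)
      =ᶠ[nhds r] (fun z => ((2/p)^2 / Real.Gamma (1/p)^2) * ∑' k, calG p ω φ k z) := by
    filter_upwards [isOpen_Ioi.mem_nhds hr] with t ht
    simp only [calJ]
    rw [tsum_congr (fun k => (term_eq hp ω φ ht k).symm), tsum_mul_left]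
    ring
  have hval : ((2/p)^2 / Real.Gamma (1/p)^2) * ∑' k, calG' p ω φ k r =
      r ^ (1 + (p - 1) * ω) * calJ p ω φ r := by
    simp only [calJ]
    rw [tsum_congr (fun k => term_deriv_eq hp hω φ hr k), tsum_mul_left]
    ring
  rw [← hval]
  exact hder2.congr_of_eventuallyEq heq
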